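/- Fix d ≥ 1. There exist constants c₁ > 1 and c₂ > 0 such that for every t > 0, C > 0, and ε > 0, the Cameron–Martin ball H_t(C) = { f : [0,t] → ℝ^d absolutely continuous, f(0) = 0, (∫₀ᵗ ‖f'(s)‖₂² ds)^{1/2} ≤ C } can be covered by at most c₁ · exp(c₂ · C t / ε) balls of radius ε in the L²([0,t]; ℝ^d) metric. -/

import Mathlib

open Real MeasureTheory

/-- The Cameron–Martin ball `H_t(C)`: absolutely continuous paths
`f : [0,t] → ℝ^d` with `f 0 = 0` whose derivative has L² norm at most `C`. -/
def CMBall (d : ℕ) (T R : ℝ) : Set (ℝ → EuclideanSpace ℝ (Fin d)) :=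
  {f | f 0 = 0 ∧ ∃ f' : ℝ → EuclideanSpace ℝ (Fin d),
      IntervalIntegrable f' MeasureTheory.volume 0 T ∧
      IntervalIntegrable (fun s => ‖f' s‖ ^ 2) MeasureTheory.volume 0 T ∧
      (∀ s ∈ Set.Icc (0:ℝ) T, f s = ∫ u in (0:ℝ)..s, f' u) ∧
      Real.sqrt (∫ s in (0:ℝ)..T, ‖f' s‖ ^ 2) ≤ R}

/-- The L² distance between two paths `[0,T] → ℝ^d`. -/
noncomputable def L2dist (d : ℕ) (T : ℝ)
    (u v : ℝ → EuclideanSpace ℝ (Fin d)) : ℝ :=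
  Real.sqrt (∫ s in (0:ℝ)..T, ‖u s - v s‖ ^ 2)

section Aux
open Metric Finset

variable {d n : ℕ}

/-- Coordinate shift in the time index. -/
noncomputable def shiftL (d n : ℕ) :
    EuclideanSpace ℝ (Fin d × Fin n) →ₗ[ℝ] EuclideanSpace ℝ (Fin d × Fin n) where
  toFun v := WithLp.toLp 2 (fun p : Fin d × Fin n =>
    if h : (p.2 : ℕ) = 0 then 0
    else v (p.1, ⟨(p.2 : ℕ) - 1, lt_of_le_of_lt (Nat.pred_le _) p.2.isLt⟩))
  map_add' u v := by
    ext p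
    by_cases h : (p.2 : ℕ) = 0 <;> simp [h, PiLp.add_apply]
  map_smul' c v := by
    ext p
    by_cases h : (p.2 : ℕ) = 0 <;> simp [h, PiLp.smul_apply]

noncomputable def diffL (d n : ℕ) :
    EuclideanSpace ℝ (Fin d × Fin n) →ₗ[ℝ] EuclideanSpace ℝ (Fin d × Fin n) :=
  LinearMap.id - shiftL d n

lemma det_diffL : LinearMap.det (diffL d n) = 1 := by
  classical
  let b := (EuclideanSpace.basisFun (Fin d × Fin n) ℝ).toBasis
  rw [← LinearMap.det_toMatrix b]
  set M := LinearMap.toMatrix b b (diffL d n) with hM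
  have hentry : ∀ p q, M p q =
      (if p = q then (1:ℝ) else 0) -
      (if hp : (p.2 : ℕ) = 0 then 0 else
        if (p.1, (⟨(p.2 : ℕ) - 1, lt_of_le_of_lt (Nat.pred_le _) p.2.isLt⟩ : Fin n)) = q
          then (1:ℝ) else 0) := by
    intro p q
    rw [hM, LinearMap.toMatrix_apply]
    simp only [b, OrthonormalBasis.coe_toBasis_repr_apply, OrthonormalBasis.coe_toBasis,
      EuclideanSpace.basisFun_apply, EuclideanSpace.basisFun_repr, diffL, LinearMap.sub_apply,
      LinearMap.id_apply, shiftL, LinearMap.coe_mk, AddHom.coe_mk, PiLp.sub_apply]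
    by_cases h : (p.2 : ℕ) = 0 <;>
      simp [h, EuclideanSpace.single_apply, eq_comm]
  rw [← Matrix.det_transpose]
  have htri : Matrix.BlockTriangular M.transpose (fun p => ((p.2 : ℕ))) := by
    intro p q hlt
    have hlt' : (q.2 : ℕ) < (p.2 : ℕ) := hlt
    rw [Matrix.transpose_apply, hentry]
    have h1 : ¬ (q = p) := by intro h; rw [h] at hlt'; omega
    rw [if_neg h1]
    rcases Nat.eq_zero_or_pos (q.2 : ℕ) with h0 | h0
    · rw [dif_pos h0]; ring
    · rw [dif_neg (by omega)]
      rw [if_neg]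
      · ring
      intro hc
      have h2 := congrArg (fun r : Fin d × Fin n => (r.2 : ℕ)) hc
      simp only [] at h2
      omega
  rw [htri.det]
  refine Finset.prod_eq_one fun k hk => ?_
  have hone : M.transpose.toSquareBlock (fun p => ((p.2 : ℕ))) k = 1 := by
    ext ⟨p, hp⟩ ⟨q, hq⟩
    have hblock : (M.transpose.toSquareBlock (fun p => ((p.2 : ℕ))) k) ⟨p,hp⟩ ⟨q,hq⟩ = M q p := rfl
    rw [Matrix.one_apply, hblock, hentry]
    have hpq2 : (q.2 : ℕ) = (p.2 : ℕ) := by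
      have h1 : (p.2 : ℕ) = k := hp
      have h2 : (q.2 : ℕ) = k := hq
      omega
    have hz : (if hq0 : (q.2 : ℕ) = 0 then (0:ℝ) else
        if (q.1, (⟨(q.2 : ℕ) - 1, lt_of_le_of_lt (Nat.pred_le _) q.2.isLt⟩ : Fin n)) = p
          then (1:ℝ) else 0) = 0 := by
      rcases Nat.eq_zero_or_pos (q.2 : ℕ) with h0 | h0
      · rw [dif_pos h0]
      · rw [dif_neg (by omega)]
        rw [if_neg]
        intro hc
        have h2 := congrArg (fun r : Fin d × Fin n => (r.2 : ℕ)) hc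
        simp only [] at h2
        omega
    rw [hz, sub_zero]
    by_cases hqp : q = p
    · rw [if_pos hqp, if_pos (by rw [Subtype.ext_iff]; exact hqp.symm)]
    · rw [if_neg hqp, if_neg (by rw [Subtype.ext_iff]; exact fun hc => hqp hc.symm)]
  rw [hone, Matrix.det_one]

lemma eunorm_sq {ι : Type*} [Fintype ι] (x : EuclideanSpace ℝ ι) :
    ‖x‖ ^ 2 = ∑ i, (x i) ^ 2 := by
  rw [EuclideanSpace.norm_eq, Real.sq_sqrt (by positivity)]
  simp [sq_abs]

lemma norm_diffL_le (v : EuclideanSpace ℝ (Fin d × Fin n)) :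
    ‖diffL d n v‖ ≤ 2 * ‖v‖ := by
  have h1 : ‖shiftL d n v‖ ≤ ‖v‖ := by
    have hsq : ‖shiftL d n v‖ ^ 2 ≤ ‖v‖ ^ 2 := by
      rw [eunorm_sq, eunorm_sq]
      classical
      have : ∑ p : Fin d × Fin n, (shiftL d n v p) ^ 2
          = ∑ p ∈ Finset.univ.filter (fun p : Fin d × Fin n => (p.2 : ℕ) ≠ 0),
              (v (p.1, ⟨(p.2 : ℕ) - 1, lt_of_le_of_lt (Nat.pred_le _) p.2.isLt⟩)) ^ 2 := by
        rw [Finset.sum_filter]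
        refine Finset.sum_congr rfl fun p _ => ?_
        by_cases h : (p.2 : ℕ) = 0
        · simp [shiftL, h]
        · simp [shiftL, h]
      rw [this]
      have hinj : Set.InjOn (fun p : Fin d × Fin n =>
          (p.1, (⟨(p.2 : ℕ) - 1, lt_of_le_of_lt (Nat.pred_le _) p.2.isLt⟩ : Fin n)))
          ↑(Finset.univ.filter (fun p : Fin d × Fin n => (p.2 : ℕ) ≠ 0)) := by
        intro a ha b hb hab
        simp only [Finset.coe_filter, Set.mem_setOf_eq] at ha hb
        obtain ⟨h1', h2'⟩ := Prod.mk.injEq .. ▸ hab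
        have : (a.2 : ℕ) - 1 = (b.2 : ℕ) - 1 := congrArg Fin.val h2'
        exact Prod.ext h1' (Fin.ext (by omega))
      calc _ = ∑ q ∈ (Finset.univ.filter (fun p : Fin d × Fin n => (p.2 : ℕ) ≠ 0)).image
                (fun p : Fin d × Fin n =>
                  (p.1, (⟨(p.2 : ℕ) - 1, lt_of_le_of_lt (Nat.pred_le _) p.2.isLt⟩ : Fin n))),
              (v q) ^ 2 := by
              rw [Finset.sum_image (fun a ha b hb => hinj (by simpa using ha) (by simpa using hb))]
        _ ≤ ∑ q : Fin d × Fin n, (v q) ^ 2 :=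
              Finset.sum_le_sum_of_subset_of_nonneg (Finset.subset_univ _)
                (fun q _ _ => sq_nonneg _)
    have h2 : (0:ℝ) ≤ ‖v‖ := norm_nonneg _
    nlinarith [norm_nonneg (shiftL d n v)]
  calc ‖diffL d n v‖ = ‖v - shiftL d n v‖ := rfl
    _ ≤ ‖v‖ + ‖shiftL d n v‖ := norm_sub_le _ _
    _ ≤ 2 * ‖v‖ := by linarith

lemma pack {ι : Type*} [Fintype ι] [Nonempty ι]
    (A : EuclideanSpace ℝ ι →ₗ[ℝ] EuclideanSpace ℝ ι)
    (hdet : LinearMap.det A = 1) (hA : ∀ w, ‖A w‖ ≤ 2 * ‖w‖)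
    {R ρ : ℝ} (hρ : 0 < ρ) (hR : 0 ≤ R)
    (F : Finset (EuclideanSpace ℝ ι)) (hF : ∀ v ∈ F, ‖A v‖ ≤ R)
    (hsep : (↑F : Set (EuclideanSpace ℝ ι)).Pairwise fun u v => 2*ρ ≤ dist u v) :
    (F.card : ℝ) * ρ ^ (Fintype.card ι) ≤ (R + 4*ρ) ^ (Fintype.card ι) := by
  classical
  set N := Fintype.card ι with hN
  have hfr : Module.finrank ℝ (EuclideanSpace ℝ ι) = N := finrank_euclideanSpace
  have hdisj : (↑F : Set (EuclideanSpace ℝ ι)).PairwiseDisjoint (fun p => ball p ρ) := by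
    intro u hu v hv huv
    exact ball_disjoint_ball (by have := hsep hu hv huv; linarith)
  have hsub : ∀ p ∈ F, ball p ρ ⊆ ⇑A ⁻¹' (closedBall 0 (R + 4*ρ)) := by
    intro p hp z hz
    simp only [Set.mem_preimage, mem_closedBall, dist_zero_right]
    have h1 : A z = A p + A (z - p) := by rw [map_sub]; abel
    have h2 : ‖A (z - p)‖ ≤ 2 * ‖z - p‖ := hA _
    have h3 : ‖z - p‖ ≤ ρ := by
      rw [← dist_eq_norm]; exact le_of_lt (mem_ball.mp hz)
    have h4 := hF p hp
    calc ‖A z‖ ≤ ‖A p‖ + ‖A (z-p)‖ := by rw [h1]; exact norm_add_le _ _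
      _ ≤ R + 4*ρ := by linarith
  have hmeas : (volume : Measure (EuclideanSpace ℝ ι)) (⋃ p ∈ F, ball p ρ)
      = ∑ p ∈ F, volume (ball p ρ) :=
    measure_biUnion_finset hdisj (fun p _ => measurableSet_ball)
  have hball : ∀ p : EuclideanSpace ℝ ι, volume (ball p ρ)
      = ENNReal.ofReal (ρ ^ N) * volume (ball (0:EuclideanSpace ℝ ι) 1) := by
    intro p
    rw [Measure.addHaar_ball volume p hρ.le, hfr]
  have hcontain : volume (⋃ p ∈ F, ball p ρ) ≤ volume (⇑A ⁻¹' (closedBall 0 (R + 4*ρ))) :=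
    measure_mono (Set.iUnion₂_subset hsub)
  have hpre : volume (⇑A ⁻¹' (closedBall (0:EuclideanSpace ℝ ι) (R + 4*ρ)))
      = volume (closedBall (0:EuclideanSpace ℝ ι) (R + 4*ρ)) := by
    rw [Measure.addHaar_preimage_linearMap volume (by rw [hdet]; norm_num), hdet]
    simp
  have hcb : volume (closedBall (0:EuclideanSpace ℝ ι) (R + 4*ρ))
      = ENNReal.ofReal ((R + 4*ρ) ^ N) * volume (ball (0:EuclideanSpace ℝ ι) 1) := by
    rw [Measure.addHaar_closedBall volume (0:EuclideanSpace ℝ ι) (by positivity), hfr]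
  have hsum : ∑ p ∈ F, volume (ball p ρ)
      = (F.card : ENNReal) * (ENNReal.ofReal (ρ ^ N) * volume (ball (0:EuclideanSpace ℝ ι) 1)) := by
    rw [Finset.sum_congr rfl (fun p _ => hball p), Finset.sum_const, nsmul_eq_mul]
  have hfin : volume (ball (0:EuclideanSpace ℝ ι) 1) ≠ ⊤ := measure_ball_lt_top.ne
  have hpos : volume (ball (0:EuclideanSpace ℝ ι) 1) ≠ 0 :=
    (measure_ball_pos volume _ one_pos).ne'
  have key : ((F.card : ENNReal) * ENNReal.ofReal (ρ ^ N)) * volume (ball (0:EuclideanSpace ℝ ι) 1)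
      ≤ ENNReal.ofReal ((R + 4*ρ) ^ N) * volume (ball (0:EuclideanSpace ℝ ι) 1) := by
    rw [mul_assoc, ← hsum, ← hmeas]
    exact hcontain.trans (le_of_eq (hpre.trans hcb))
  have key2 : (F.card : ENNReal) * ENNReal.ofReal (ρ ^ N) ≤ ENNReal.ofReal ((R + 4*ρ) ^ N) :=
    (ENNReal.mul_le_mul_iff_left hpos hfin).1 key
  have key3 : ENNReal.ofReal ((F.card : ℝ) * ρ ^ N) ≤ ENNReal.ofReal ((R + 4*ρ) ^ N) := by
    rw [ENNReal.ofReal_mul (by positivity)]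
    rw [ENNReal.ofReal_natCast]
    exact key2
  exact (ENNReal.ofReal_le_ofReal_iff (by positivity)).1 key3

open intervalIntegral in
lemma cs_integral {X : Type*} [NormedAddCommGroup X] {g : ℝ → X} {a b : ℝ} (hab : a ≤ b)
    (h1 : IntervalIntegrable g volume a b)
    (h2 : IntervalIntegrable (fun s => ‖g s‖ ^ 2) volume a b) :
    (∫ s in a..b, ‖g s‖) ^ 2 ≤ (b - a) * ∫ s in a..b, ‖g s‖ ^ 2 := by
  set μ := volume.restrict (Set.Ioc a b) with hμ
  haveI : IsFiniteMeasure μ := by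
    constructor
    rw [hμ, Measure.restrict_apply_univ, Real.volume_Ioc]
    exact ENNReal.ofReal_lt_top
  have hion : IntegrableOn g (Set.Ioc a b) volume :=
    (intervalIntegrable_iff_integrableOn_Ioc_of_le hab).1 h1
  have hion2 : IntegrableOn (fun s => ‖g s‖ ^ 2) (Set.Ioc a b) volume :=
    (intervalIntegrable_iff_integrableOn_Ioc_of_le hab).1 h2
  have hmeas : AEStronglyMeasurable (fun s => ‖g s‖) μ := hion.norm.aestronglyMeasurable
  have hmem : MemLp (fun s => ‖g s‖) (ENNReal.ofReal 2) μ := by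
    rw [show ENNReal.ofReal 2 = 2 by norm_num]
    exact (memLp_two_iff_integrable_sq hmeas).2 hion2
  have hmem1 : MemLp (fun _ : ℝ => (1:ℝ)) (ENNReal.ofReal 2) μ := memLp_const 1
  have hconj : Real.HolderConjugate 2 2 := Real.HolderConjugate.two_two
  have hH := MeasureTheory.integral_mul_le_Lp_mul_Lq_of_nonneg hconj
    (Filter.Eventually.of_forall (fun s => norm_nonneg (g s)))
    (Filter.Eventually.of_forall (fun _ => zero_le_one)) hmem hmem1
  simp only [mul_one, one_pow] at hH
  have hrw : ∀ x : ℝ, x ^ (2:ℝ) = x ^ 2 := fun x => by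
    rw [show (2:ℝ) = ((2:ℕ):ℝ) by norm_num, Real.rpow_natCast]
  simp only [hrw] at hH
  have hint1 : ∫ s, (1:ℝ) ^ 2 ∂μ = b - a := by
    simp only [one_pow, hμ]
    rw [MeasureTheory.setIntegral_const, measureReal_def, Real.volume_Ioc, smul_eq_mul, mul_one,
      ENNReal.toReal_ofReal (by linarith)]
  rw [hint1] at hH
  have hL : ∫ s, ‖g s‖ ∂μ = ∫ s in a..b, ‖g s‖ := (integral_of_le hab).symm
  have hR : ∫ s, ‖g s‖ ^ 2 ∂μ = ∫ s in a..b, ‖g s‖ ^ 2 := (integral_of_le hab).symm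
  rw [hL, hR] at hH
  have hI : 0 ≤ ∫ s in a..b, ‖g s‖ ^ 2 :=
    integral_nonneg hab (fun s _ => sq_nonneg _)
  have hX : 0 ≤ ∫ s in a..b, ‖g s‖ := integral_nonneg hab (fun s _ => norm_nonneg _)
  have hsq : ∀ y : ℝ, 0 ≤ y → y ^ (1/2 : ℝ) = Real.sqrt y := fun y hy => by
    rw [Real.sqrt_eq_rpow]
  rw [hsq _ hI, hsq _ (by linarith)] at hH
  calc (∫ s in a..b, ‖g s‖) ^ 2 ≤ (Real.sqrt (∫ s in a..b, ‖g s‖ ^ 2) * Real.sqrt (b - a)) ^ 2 := by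
        apply pow_le_pow_left₀ hX hH
    _ = (b - a) * ∫ s in a..b, ‖g s‖ ^ 2 := by
        rw [mul_pow, Real.sq_sqrt hI, Real.sq_sqrt (by linarith)]
        ring

lemma incr_sq {dd : ℕ} {f f' : ℝ → EuclideanSpace ℝ (Fin dd)} {t : ℝ}
    (hi1 : IntervalIntegrable f' volume 0 t)
    (hi2 : IntervalIntegrable (fun s => ‖f' s‖ ^ 2) volume 0 t)
    (hfeq : ∀ s ∈ Set.Icc (0:ℝ) t, f s = ∫ u in (0:ℝ)..s, f' u)
    {a b : ℝ} (h0a : 0 ≤ a) (hab : a ≤ b) (hbt : b ≤ t) :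
    ‖f b - f a‖ ^ 2 ≤ (b - a) * ∫ s in a..b, ‖f' s‖ ^ 2 := by
  have h0t : (0:ℝ) ≤ t := le_trans h0a (hab.trans hbt)
  have hsub : Set.uIcc a b ⊆ Set.uIcc (0:ℝ) t := by
    rw [Set.uIcc_of_le hab, Set.uIcc_of_le h0t]
    exact Set.Icc_subset_Icc h0a hbt
  have h1 : IntervalIntegrable f' volume a b := hi1.mono_set hsub
  have h2 : IntervalIntegrable (fun s => ‖f' s‖ ^ 2) volume a b := hi2.mono_set hsub
  have hfb : f b - f a = ∫ u in a..b, f' u := by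
    rw [hfeq b ⟨le_trans h0a hab, hbt⟩, hfeq a ⟨h0a, hab.trans hbt⟩]
    have hs1 : Set.uIcc (0:ℝ) b ⊆ Set.uIcc (0:ℝ) t := by
      rw [Set.uIcc_of_le (le_trans h0a hab), Set.uIcc_of_le h0t]
      exact Set.Icc_subset_Icc le_rfl hbt
    have hs2 : Set.uIcc (0:ℝ) a ⊆ Set.uIcc (0:ℝ) t := by
      rw [Set.uIcc_of_le h0a, Set.uIcc_of_le h0t]
      exact Set.Icc_subset_Icc le_rfl (hab.trans hbt)
    exact intervalIntegral.integral_interval_sub_left (hi1.mono_set hs1) (hi1.mono_set hs2)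
  have hnorm : ‖f b - f a‖ ≤ ∫ u in a..b, ‖f' u‖ := by
    rw [hfb]
    exact intervalIntegral.norm_integral_le_integral_norm hab
  have hcs := cs_integral hab h1 h2
  have h3 : (0:ℝ) ≤ ∫ u in a..b, ‖f' u‖ :=
    intervalIntegral.integral_nonneg hab (fun s _ => norm_nonneg _)
  nlinarith [norm_nonneg (f b - f a)]

/-- Index of the subinterval containing `s`. -/
noncomputable def jdx (n : ℕ) [NeZero n] (h s : ℝ) : Fin n :=
  ⟨min (n-1) ⌊s/h⌋₊, by have := Nat.pos_of_ne_zero (NeZero.ne n); omega⟩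

/-- Step function associated to a vector of values. -/
noncomputable def stepf (d n : ℕ) [NeZero n] (h : ℝ)
    (v : EuclideanSpace ℝ (Fin d × Fin n)) : ℝ → EuclideanSpace ℝ (Fin d) :=
  fun s => (WithLp.toLp 2 (fun i => v (i, jdx n h s)) : EuclideanSpace ℝ (Fin d))

lemma jdx_eq {n : ℕ} [NeZero n] {h : ℝ} (hh : 0 < h) {j : ℕ} (hj : j < n) {s : ℝ}
    (hs1 : (j:ℝ)*h ≤ s) (hs2 : s < ((j:ℝ)+1)*h) : jdx n h s = ⟨j, hj⟩ := by
  have h0s : (0:ℝ) ≤ s := le_trans (by positivity) hs1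
  have hfl : ⌊s/h⌋₊ = j := by
    rw [Nat.floor_eq_iff (by positivity)]
    constructor
    · rw [le_div_iff₀ hh]; exact hs1
    · rw [div_lt_iff₀ hh]; exact_mod_cast hs2
  apply Fin.ext
  simp only [jdx, hfl]
  omega

lemma stepf_eq {d n : ℕ} [NeZero n] {h : ℝ} (hh : 0 < h)
    (v : EuclideanSpace ℝ (Fin d × Fin n)) {j : ℕ} (hj : j < n) {s : ℝ}
    (hs1 : (j:ℝ)*h ≤ s) (hs2 : s < ((j:ℝ)+1)*h) :
    stepf d n h v s = (WithLp.toLp 2 (fun i => v (i, ⟨j, hj⟩)) : EuclideanSpace ℝ (Fin d)) := by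
  unfold stepf
  rw [jdx_eq hh hj hs1 hs2]

lemma diffL_apply (v : EuclideanSpace ℝ (Fin d × Fin n)) (p : Fin d × Fin n) :
    diffL d n v p = v p - (if hp : (p.2 : ℕ) = 0 then 0
      else v (p.1, ⟨(p.2 : ℕ) - 1, lt_of_le_of_lt (Nat.pred_le _) p.2.isLt⟩)) := rfl

set_option maxHeartbeats 2000000 in
lemma key (d : ℕ) (hd : 1 ≤ d) (t C ε : ℝ) (ht : 0 < t) (hC : 0 < C) (hε : 0 < ε) :
    ∃ S : Finset (ℝ → EuclideanSpace ℝ (Fin d)),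
      (S.card : ℝ) ≤ (6:ℝ)^d * Real.exp (4 * d * (C * t / ε)) ∧
      ∀ f ∈ CMBall d t C, ∃ k ∈ S, L2dist d t f k ≤ ε := by
  classical
  set n : ℕ := ⌈2*C*t/ε⌉₊ with hn_def
  have hnpos : 0 < n := Nat.ceil_pos.2 (by positivity)
  haveI : NeZero n := ⟨hnpos.ne'⟩
  haveI : NeZero d := ⟨by omega⟩
  set h : ℝ := t / n with hh_def
  have hh : 0 < h := by positivity
  have hnh : (n:ℝ) * h = t := by rw [hh_def]; field_simp
  have hCh : 2 * (C * h) ≤ ε := by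
    have h1 : 2*C*t/ε ≤ (n:ℝ) := Nat.le_ceil _
    rw [div_le_iff₀ hε] at h1
    have hn0 : (0:ℝ) < n := by exact_mod_cast hnpos
    have h2 : 2 * (C * h) * n = 2*C*t := by
      rw [hh_def]; field_simp
    nlinarith [h1, h2, hn0]
  set sh : ℝ := Real.sqrt h with hsh_def
  have hsh : 0 < sh := Real.sqrt_pos.2 hh
  have hsh2 : sh^2 = h := Real.sq_sqrt hh.le
  set ρ : ℝ := ε / (4*sh) with hρ_def
  have hρ : 0 < ρ := by positivity
  set R : ℝ := C * sh with hR_def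
  have hR : 0 < R := by positivity
  have hRρ : R ≤ 2*ρ := by
    rw [hR_def, hρ_def]
    rw [show 2 * (ε / (4*sh)) = ε / (2*sh) by field_simp; ring]
    rw [le_div_iff₀ (by positivity)]
    calc C * sh * (2*sh) = 2*(C*h) := by rw [← hsh2]; ring
      _ ≤ ε := hCh
  set A := diffL d n with hA_def
  set K : Set (EuclideanSpace ℝ (Fin d × Fin n)) := {w | ‖A w‖ ≤ R} with hK_def
  set SS : Set (Set (EuclideanSpace ℝ (Fin d × Fin n))) :=
    {Q | Q ⊆ K ∧ Q.Pairwise fun u w => 2*ρ ≤ dist u w} with hSS_def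
  obtain ⟨P, hPmax⟩ : ∃ P, Maximal (· ∈ SS) P := by
    apply zorn_subset
    intro c hcS hchain
    refine ⟨⋃₀ c, ⟨Set.sUnion_subset fun s hs => (hcS hs).1, ?_⟩,
      fun s hs => Set.subset_sUnion_of_mem hs⟩
    intro u hu w hw huw
    obtain ⟨su, hsu, hu'⟩ := hu
    obtain ⟨sw, hsw, hw'⟩ := hw
    rcases hchain.total hsu hsw with hss | hss
    · exact (hcS hsw).2 (hss hu') hw' huw
    · exact (hcS hsu).2 hu' (hss hw') huw
  haveI : Nonempty (Fin d × Fin n) := ⟨(⟨0, by omega⟩, ⟨0, hnpos⟩)⟩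
  have hNcard : Fintype.card (Fin d × Fin n) = d * n := by simp
  have hcardF : ∀ F : Finset (EuclideanSpace ℝ (Fin d × Fin n)),
      ↑F ⊆ P → F.card ≤ 6^(d*n) := by
    intro F hFP
    have hb := pack A det_diffL norm_diffL_le hρ hR.le F
      (fun w hw => hPmax.1.1 (hFP hw))
      (hPmax.1.2.mono hFP)
    rw [hNcard] at hb
    have h6 : (R + 4*ρ) ^ (d*n) ≤ (6*ρ) ^ (d*n) :=
      pow_le_pow_left₀ (by positivity) (by linarith) _
    have hb2 : (F.card : ℝ) * ρ ^ (d*n) ≤ 6^(d*n) * ρ ^ (d*n) := by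
      calc (F.card : ℝ) * ρ ^ (d*n) ≤ (R + 4*ρ) ^ (d*n) := hb
        _ ≤ (6*ρ) ^ (d*n) := h6
        _ = 6^(d*n) * ρ ^ (d*n) := mul_pow _ _ _
    have hb3 : (F.card : ℝ) ≤ 6^(d*n) :=
      le_of_mul_le_mul_right hb2 (by positivity)
    have hb4 : (F.card : ℝ) ≤ ((6^(d*n) : ℕ) : ℝ) := by push_cast; exact hb3
    exact_mod_cast hb4
  have hPfin : P.Finite := by
    by_contra hinf
    obtain ⟨F, hFP, hFcard⟩ := Set.Infinite.exists_subset_card_eq hinf (6^(d*n)+1)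
    have := hcardF F hFP
    omega
  set Pfin := hPfin.toFinset with hPfin_def
  have hPcard : Pfin.card ≤ 6^(d*n) := hcardF Pfin (by simp [hPfin_def])
  refine ⟨Pfin.image (stepf d n h), ?_, ?_⟩
  · have hlog6 : Real.log 6 ≤ 2 := by
      rw [show (2:ℝ) = Real.log (Real.exp 2) by rw [Real.log_exp]]
      apply Real.log_le_log (by norm_num)
      have h1 : Real.exp 2 = Real.exp 1 * Real.exp 1 := by
        rw [← Real.exp_add]; norm_num
      nlinarith [Real.exp_one_gt_d9]
    have hcast : (((Pfin.image (stepf d n h)).card : ℕ) : ℝ) ≤ (6:ℝ)^(d*n) := by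
      have h1 : (Pfin.image (stepf d n h)).card ≤ 6^(d*n) :=
        le_trans Finset.card_image_le hPcard
      calc (((Pfin.image (stepf d n h)).card : ℕ) : ℝ) ≤ ((6^(d*n) : ℕ) : ℝ) := by
            exact_mod_cast h1
        _ = (6:ℝ)^(d*n) := by push_cast; ring
    have hn1 : (n:ℝ) ≤ 2*C*t/ε + 1 := le_of_lt (Nat.ceil_lt_add_one (by positivity))
    have hexp : (6:ℝ)^(d*n) ≤ 6^d * Real.exp (4*d*(C*t/ε)) := by
      have h6 : (6:ℝ)^(d*n) = Real.exp (((d*n : ℕ) : ℝ) * Real.log 6) := by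
        rw [Real.exp_nat_mul, Real.exp_log (by norm_num)]
      rw [h6]
      have hlogpos : 0 < Real.log 6 := Real.log_pos (by norm_num)
      have hd0 : (0:ℝ) ≤ d := Nat.cast_nonneg d
      have hq : (0:ℝ) ≤ C*t/ε := by positivity
      have h7 : ((d*n : ℕ) : ℝ) * Real.log 6 ≤ d * Real.log 6 + 4*d*(C*t/ε) := by
        have h8 : ((d:ℝ)) * (n:ℝ) ≤ (d:ℝ) * (2*(C*t/ε) + 1) := by
          apply mul_le_mul_of_nonneg_left _ hd0
          calc (n:ℝ) ≤ 2*C*t/ε + 1 := hn1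
            _ = 2*(C*t/ε) + 1 := by ring
        push_cast
        calc (d:ℝ) * n * Real.log 6 ≤ ((d:ℝ) * (2*(C*t/ε)+1)) * Real.log 6 :=
              mul_le_mul_of_nonneg_right h8 hlogpos.le
          _ = (d:ℝ)*Real.log 6 + (2*((d:ℝ)*(C*t/ε)))*Real.log 6 := by ring
          _ ≤ (d:ℝ)*Real.log 6 + (2*((d:ℝ)*(C*t/ε)))*2 := by
              have h9 : (0:ℝ) ≤ 2*((d:ℝ)*(C*t/ε)) := by positivity
              nlinarith [mul_le_mul_of_nonneg_left hlog6 h9]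
          _ ≤ (d:ℝ) * Real.log 6 + 4*(d:ℝ)*(C*t/ε) := le_of_eq (by ring)
      calc Real.exp (((d*n : ℕ) : ℝ) * Real.log 6)
          ≤ Real.exp ((d : ℝ) * Real.log 6 + 4*d*(C*t/ε)) := Real.exp_le_exp.2 h7
        _ = 6^d * Real.exp (4*d*(C*t/ε)) := by
            rw [Real.exp_add]
            congr 1
            rw [Real.exp_nat_mul, Real.exp_log (by norm_num)]
    exact hcast.trans hexp
  · rintro f ⟨hf0, f', hi1, hi2, hfeq, hfC⟩
    set a : ℕ → ℝ := fun m => (m:ℝ) * h with ha_def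
    have ha0 : a 0 = 0 := by simp [ha_def]
    have han : a n = t := by rw [ha_def]; exact hnh
    have hastep : ∀ m : ℕ, a (m+1) = a m + h := by
      intro m; rw [ha_def]; push_cast; ring
    have hann : ∀ m : ℕ, 0 ≤ a m := by
      intro m; rw [ha_def]; positivity
    have hamono : ∀ m : ℕ, a m ≤ a (m+1) := fun m => by
      rw [hastep]; linarith
    have hale : ∀ m : ℕ, m ≤ n → a m ≤ t := by
      intro m hm
      rw [← han, ha_def]
      exact mul_le_mul_of_nonneg_right (by exact_mod_cast hm) hh.le
    have hC2 : ∫ s in (0:ℝ)..t, ‖f' s‖^2 ≤ C^2 := by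
      have h0 : 0 ≤ ∫ s in (0:ℝ)..t, ‖f' s‖^2 :=
        intervalIntegral.integral_nonneg ht.le (fun s _ => sq_nonneg _)
      nlinarith [Real.sq_sqrt h0, Real.sqrt_nonneg (∫ s in (0:ℝ)..t, ‖f' s‖^2)]
    have hIsub : ∀ {x y : ℝ}, 0 ≤ x → x ≤ y → y ≤ t →
        IntervalIntegrable (fun s => ‖f' s‖^2) volume x y := by
      intro x y hx hxy hyt
      apply hi2.mono_set
      rw [Set.uIcc_of_le hxy, Set.uIcc_of_le ht.le]
      exact Set.Icc_subset_Icc hx hyt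
    have hIj : ∀ j : ℕ, j < n → IntervalIntegrable (fun s => ‖f' s‖^2) volume (a j) (a (j+1)) :=
      fun j hj => hIsub (hann j) (hamono j) (hale (j+1) hj)
    have hsumE : ∑ j ∈ Finset.range n, (∫ s in a j..a (j+1), ‖f' s‖^2)
        = ∫ s in (0:ℝ)..t, ‖f' s‖^2 := by
      have := intervalIntegral.sum_integral_adjacent_intervals
        (f := fun s => ‖f' s‖^2) (μ := volume) (a := a) (n := n) (fun j hj => hIj j hj)
      rwa [ha0, han] at this
    have hincr : ∀ j : ℕ, j < n →
        ‖f (a (j+1)) - f (a j)‖^2 ≤ h * ∫ s in a j..a (j+1), ‖f' s‖^2 := by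
      intro j hj
      have := incr_sq hi1 hi2 hfeq (hann j) (hamono j) (hale (j+1) hj)
      rwa [show a (j+1) - a j = h by rw [hastep]; ring] at this
    set v : EuclideanSpace ℝ (Fin d × Fin n) :=
      WithLp.toLp 2 (fun q : Fin d × Fin n => f (a ((q.2 : ℕ)+1)) q.1) with hv_def
    have hAv : ∀ q : Fin d × Fin n, A v q = f (a ((q.2:ℕ)+1)) q.1 - f (a (q.2:ℕ)) q.1 := by
      intro q
      rw [hA_def, diffL_apply]
      by_cases hq : (q.2 : ℕ) = 0
      · rw [dif_pos hq]
        have h0' : a ((q.2:ℕ)) = 0 := by rw [hq]; exact ha0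
        rw [h0', hf0]
        simp [hv_def]
      · rw [dif_neg hq]
        have : ((q.2:ℕ) - 1) + 1 = (q.2:ℕ) := by omega
        simp only [hv_def, this]
    have hAvnorm : ‖A v‖^2 ≤ h * C^2 := by
      have e1 : ‖A v‖^2 = ∑ j : Fin n, ∑ i : Fin d, (A v (i,j))^2 := by
        rw [eunorm_sq, Fintype.sum_prod_type]
        exact Finset.sum_comm
      have e2 : ∀ j : Fin n, ∑ i : Fin d, (A v (i,j))^2
          = ‖f (a ((j:ℕ)+1)) - f (a (j:ℕ))‖^2 := by
        intro j
        rw [eunorm_sq]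
        apply Finset.sum_congr rfl
        intro i _
        rw [hAv (i,j), PiLp.sub_apply]
      rw [e1]
      calc ∑ j : Fin n, ∑ i : Fin d, (A v (i,j))^2
          = ∑ j : Fin n, ‖f (a ((j:ℕ)+1)) - f (a (j:ℕ))‖^2 :=
            Finset.sum_congr rfl fun j _ => e2 j
        _ ≤ ∑ j : Fin n, h * ∫ s in a (j:ℕ)..a ((j:ℕ)+1), ‖f' s‖^2 :=
            Finset.sum_le_sum fun j _ => hincr (j:ℕ) j.isLt
        _ = ∑ j ∈ Finset.range n, (h * ∫ s in a j..a (j+1), ‖f' s‖^2) :=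
            Fin.sum_univ_eq_sum_range (fun m => h * ∫ s in a m..a (m+1), ‖f' s‖^2) n
        _ = h * ∑ j ∈ Finset.range n, ∫ s in a j..a (j+1), ‖f' s‖^2 := by
            rw [Finset.mul_sum]
        _ = h * ∫ s in (0:ℝ)..t, ‖f' s‖^2 := by rw [hsumE]
        _ ≤ h * C^2 := mul_le_mul_of_nonneg_left hC2 hh.le
    have hvK : v ∈ K := by
      rw [hK_def, Set.mem_setOf_eq]
      have hR2 : R^2 = h * C^2 := by rw [hR_def, mul_pow, hsh2]; ring
      have h2 : ‖A v‖^2 ≤ R^2 := by rw [hR2]; exact hAvnorm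
      have h1 : (0:ℝ) ≤ ‖A v‖ := norm_nonneg _
      calc ‖A v‖ = Real.sqrt (‖A v‖^2) := (Real.sqrt_sq h1).symm
        _ ≤ Real.sqrt (R^2) := Real.sqrt_le_sqrt h2
        _ = R := Real.sqrt_sq hR.le
    obtain ⟨p, hpP, hdvp⟩ : ∃ p ∈ P, dist v p < 2*ρ := by
      by_cases hvP : v ∈ P
      · exact ⟨v, hvP, (le_of_eq (dist_self v)).trans_lt (by positivity)⟩
      · by_contra hcon
        push_neg at hcon
        have hsymm : Symmetric (fun u w : EuclideanSpace ℝ (Fin d × Fin n) => 2*ρ ≤ dist u w) :=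
          fun u w huw => by
            show 2*ρ ≤ dist w u
            rw [dist_comm]
            exact huw
        have hins : insert v P ∈ SS := by
          refine ⟨Set.insert_subset hvK hPmax.1.1, ?_⟩
          haveI : Std.Symm (fun u w : EuclideanSpace ℝ (Fin d × Fin n) => 2*ρ ≤ dist u w) := ⟨hsymm⟩
          rw [Set.pairwise_insert_of_symm]
          exact ⟨hPmax.1.2, fun b hb _ => hcon b hb⟩
        exact hvP (hPmax.2 hins (Set.subset_insert v P) (Set.mem_insert v P))
    refine ⟨stepf d n h p, Finset.mem_image_of_mem _ (hPfin.mem_toFinset.2 hpP), ?_⟩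
    -- continuity of f on [0, t]
    have hfc : ContinuousOn f (Set.Icc 0 t) := by
      have hprim : ContinuousOn (fun b => ∫ u in (0:ℝ)..b, f' u) (Set.uIcc 0 t) :=
        intervalIntegral.continuousOn_primitive_interval' hi1 Set.left_mem_uIcc
      rw [Set.uIcc_of_le ht.le] at hprim
      exact hprim.congr hfeq
    -- per-interval bounds
    have hmain : ∀ j : ℕ, ∀ hj : j < n,
        ∫ s in a j..a (j+1), ‖f s - stepf d n h p s‖^2
          ≤ 2*h^2 * (∫ s in a j..a (j+1), ‖f' s‖^2)
            + 2*h * ∑ i : Fin d, (v (i, ⟨j, hj⟩) - p (i, ⟨j, hj⟩))^2 := by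
      intro j hj
      set Pj : EuclideanSpace ℝ (Fin d) := WithLp.toLp 2 (fun i => p (i, ⟨j, hj⟩)) with hPj_def
      set Ej : ℝ := ∫ s in a j..a (j+1), ‖f' s‖^2 with hEj_def
      have hEjnn : 0 ≤ Ej :=
        intervalIntegral.integral_nonneg (hamono j) (fun s _ => sq_nonneg _)
      have hstep : ∀ s ∈ Set.Ico (a j) (a (j+1)), stepf d n h p s = Pj := by
        intro s hs
        have h1 : (j:ℝ)*h ≤ s := hs.1
        have h2 : s < ((j:ℝ)+1)*h := by
          have e : a (j+1) = ((j:ℝ)+1)*h := by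
            show ((j+1 : ℕ):ℝ)*h = ((j:ℝ)+1)*h
            push_cast; ring
          rw [← e]; exact hs.2
        rw [stepf_eq hh p hj h1 h2]
      have hane : ∀ᵐ s : ℝ, s ≠ a (j+1) := by
        rw [MeasureTheory.ae_iff]
        have : {s : ℝ | ¬ s ≠ a (j+1)} = {a (j+1)} := by ext x; simp
        rw [this, measure_singleton]
      have hae : ∀ᵐ s : ℝ, s ∈ Set.uIoc (a j) (a (j+1)) →
          ‖f s - stepf d n h p s‖^2 = ‖f s - Pj‖^2 := by
        filter_upwards [hane] with s hs hmem
        rw [Set.uIoc_of_le (hamono j)] at hmem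
        have : s ∈ Set.Ico (a j) (a (j+1)) := ⟨hmem.1.le, lt_of_le_of_ne hmem.2 hs⟩
        rw [hstep s this]
      have hsubIcc : Set.Icc (a j) (a (j+1)) ⊆ Set.Icc 0 t :=
        Set.Icc_subset_Icc (hann j) (hale (j+1) hj)
      have hIntPj : IntervalIntegrable (fun s => ‖f s - Pj‖^2) volume (a j) (a (j+1)) := by
        apply ContinuousOn.intervalIntegrable
        rw [Set.uIcc_of_le (hamono j)]
        exact (((hfc.mono hsubIcc).sub continuousOn_const).norm.pow 2)
      have hbound : ∀ s ∈ Set.Icc (a j) (a (j+1)),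
          ‖f s - Pj‖^2 ≤ 2*(h*Ej) + 2*‖f (a (j+1)) - Pj‖^2 := by
        intro s hs
        have htri : ‖f s - Pj‖ ≤ ‖f s - f (a (j+1))‖ + ‖f (a (j+1)) - Pj‖ := by
          have := dist_triangle (f s) (f (a (j+1))) Pj
          simpa [dist_eq_norm] using this
        have hincr2 : ‖f (a (j+1)) - f s‖^2 ≤ h * Ej := by
          have h1 := incr_sq hi1 hi2 hfeq (le_trans (hann j) hs.1) hs.2 (hale (j+1) hj)
          have h2 : a (j+1) - s ≤ h := by
            have := hs.1
            rw [hastep] at *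
            linarith
          have h3 : ∫ u in s..a (j+1), ‖f' u‖^2 ≤ Ej := by
            rw [hEj_def]
            apply intervalIntegral.integral_mono_interval hs.1 hs.2 le_rfl
            · exact Filter.Eventually.of_forall (fun u => sq_nonneg _)
            · exact hIj j hj
          have h4 : (0:ℝ) ≤ ∫ u in s..a (j+1), ‖f' u‖^2 :=
            intervalIntegral.integral_nonneg hs.2 (fun u _ => sq_nonneg _)
          calc ‖f (a (j+1)) - f s‖^2 ≤ (a (j+1) - s) * ∫ u in s..a (j+1), ‖f' u‖^2 := h1
            _ ≤ h * Ej := by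
                apply mul_le_mul h2 h3 h4 hh.le
        have h5 : ‖f s - f (a (j+1))‖^2 ≤ h * Ej := by
          rwa [norm_sub_rev] at hincr2
        have h6 : ‖f s - Pj‖^2 ≤ (‖f s - f (a (j+1))‖ + ‖f (a (j+1)) - Pj‖)^2 :=
          pow_le_pow_left₀ (norm_nonneg _) htri 2
        nlinarith [h6, h5, sq_nonneg (‖f s - f (a (j+1))‖ - ‖f (a (j+1)) - Pj‖)]
      have hconst : ∫ s in a j..a (j+1), (2*(h*Ej) + 2*‖f (a (j+1)) - Pj‖^2)
          = h * (2*(h*Ej) + 2*‖f (a (j+1)) - Pj‖^2) := by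
        rw [intervalIntegral.integral_const, smul_eq_mul, hastep]
        ring
      have hint_le : ∫ s in a j..a (j+1), ‖f s - Pj‖^2
          ≤ h * (2*(h*Ej) + 2*‖f (a (j+1)) - Pj‖^2) := by
        rw [← hconst]
        exact intervalIntegral.integral_mono_on (hamono j) hIntPj
          intervalIntegrable_const hbound
      have hVnorm : ‖f (a (j+1)) - Pj‖^2 = ∑ i : Fin d, (v (i, ⟨j, hj⟩) - p (i, ⟨j, hj⟩))^2 := by
        rw [eunorm_sq]
        apply Finset.sum_congr rfl
        intro i _
        rw [PiLp.sub_apply]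
      calc ∫ s in a j..a (j+1), ‖f s - stepf d n h p s‖^2
          = ∫ s in a j..a (j+1), ‖f s - Pj‖^2 := intervalIntegral.integral_congr_ae hae
        _ ≤ h * (2*(h*Ej) + 2*‖f (a (j+1)) - Pj‖^2) := hint_le
        _ = 2*h^2 * Ej + 2*h * ‖f (a (j+1)) - Pj‖^2 := by ring
        _ = 2*h^2 * Ej + 2*h * ∑ i : Fin d, (v (i, ⟨j, hj⟩) - p (i, ⟨j, hj⟩))^2 := by
            rw [hVnorm]
    -- integrability of the step-difference on each piece
    have hIntk : ∀ j : ℕ, j < n →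
        IntervalIntegrable (fun s => ‖f s - stepf d n h p s‖^2) volume (a j) (a (j+1)) := by
      intro j hj
      set Pj : EuclideanSpace ℝ (Fin d) := WithLp.toLp 2 (fun i => p (i, ⟨j, hj⟩)) with hPj_def
      have hsubIcc : Set.Icc (a j) (a (j+1)) ⊆ Set.Icc 0 t :=
        Set.Icc_subset_Icc (hann j) (hale (j+1) hj)
      have hIntPj : IntervalIntegrable (fun s => ‖f s - Pj‖^2) volume (a j) (a (j+1)) := by
        apply ContinuousOn.intervalIntegrable
        rw [Set.uIcc_of_le (hamono j)]
        exact (((hfc.mono hsubIcc).sub continuousOn_const).norm.pow 2)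
      apply hIntPj.congr_ae
      have hane : ∀ᵐ s : ℝ, s ≠ a (j+1) := by
        rw [MeasureTheory.ae_iff]
        have : {s : ℝ | ¬ s ≠ a (j+1)} = {a (j+1)} := by ext x; simp
        rw [this, measure_singleton]
      have hstep : ∀ s ∈ Set.Ico (a j) (a (j+1)), stepf d n h p s = Pj := by
        intro s hs
        have h1 : (j:ℝ)*h ≤ s := hs.1
        have h2 : s < ((j:ℝ)+1)*h := by
          have e : a (j+1) = ((j:ℝ)+1)*h := by
            show ((j+1 : ℕ):ℝ)*h = ((j:ℝ)+1)*h
            push_cast; ring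
          rw [← e]; exact hs.2
        rw [stepf_eq hh p hj h1 h2]
      filter_upwards [ae_restrict_of_ae hane,
        ae_restrict_mem measurableSet_uIoc] with s hs hmem
      rw [Set.uIoc_of_le (hamono j)] at hmem
      have : s ∈ Set.Ico (a j) (a (j+1)) := ⟨hmem.1.le, lt_of_le_of_ne hmem.2 hs⟩
      rw [hstep s this]
    -- sum up
    have hsplit : ∫ s in (0:ℝ)..t, ‖f s - stepf d n h p s‖^2
        = ∑ j ∈ Finset.range n, ∫ s in a j..a (j+1), ‖f s - stepf d n h p s‖^2 := by
      have := intervalIntegral.sum_integral_adjacent_intervals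
        (f := fun s => ‖f s - stepf d n h p s‖^2) (μ := volume) (a := a) (n := n)
        (fun j hj => hIntk j hj)
      rw [ha0, han] at this
      exact this.symm
    set W : Fin n → ℝ := fun j => ∑ i : Fin d, (v (i,j) - p (i,j))^2 with hW_def
    set G : ℕ → ℝ := fun m => if hm : m < n then W ⟨m, hm⟩ else 0 with hG_def
    have hGW : ∀ j : ℕ, ∀ hj : j < n, G j = W ⟨j, hj⟩ := by
      intro j hj; rw [hG_def]; exact dif_pos hj
    have hsumG : ∑ j ∈ Finset.range n, G j = ‖v - p‖^2 := by
      have h1 : ∑ j ∈ Finset.range n, G j = ∑ j : Fin n, W j := by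
        rw [← Fin.sum_univ_eq_sum_range G n]
        exact Finset.sum_congr rfl fun j _ => hGW (j:ℕ) j.isLt
      have h2 : ‖v - p‖^2 = ∑ i : Fin d, ∑ j : Fin n, ((v-p) (i,j))^2 := by
        rw [eunorm_sq, Fintype.sum_prod_type]
      have h3 : ∑ j : Fin n, W j = ∑ j : Fin n, ∑ i : Fin d, ((v-p) (i,j))^2 := by
        apply Finset.sum_congr rfl
        intro j _
        simp only [hW_def]
        apply Finset.sum_congr rfl
        intro i _
        rw [PiLp.sub_apply]
      rw [h1, h3, h2]
      exact Finset.sum_comm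
    have htotal : ∫ s in (0:ℝ)..t, ‖f s - stepf d n h p s‖^2
        ≤ 2*h^2*C^2 + 2*h*‖v - p‖^2 := by
      rw [hsplit]
      calc ∑ j ∈ Finset.range n, ∫ s in a j..a (j+1), ‖f s - stepf d n h p s‖^2
          ≤ ∑ j ∈ Finset.range n,
              (2*h^2 * (∫ s in a j..a (j+1), ‖f' s‖^2) + 2*h * G j) := by
            apply Finset.sum_le_sum
            intro j hj
            have hjn : j < n := Finset.mem_range.mp hj
            rw [hGW j hjn]
            exact hmain j hjn
        _ = 2*h^2 * (∑ j ∈ Finset.range n, ∫ s in a j..a (j+1), ‖f' s‖^2)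
              + 2*h * ∑ j ∈ Finset.range n, G j := by
            rw [Finset.sum_add_distrib, Finset.mul_sum, Finset.mul_sum]
        _ = 2*h^2 * (∫ s in (0:ℝ)..t, ‖f' s‖^2) + 2*h * ‖v - p‖^2 := by
            rw [hsumE, hsumG]
        _ ≤ 2*h^2*C^2 + 2*h*‖v - p‖^2 := by
            have h1 : 0 ≤ 2*h^2 := by positivity
            nlinarith [mul_le_mul_of_nonneg_left hC2 h1]
    have hvp2 : ‖v - p‖^2 ≤ (2*ρ)^2 := by
      have h1 : ‖v - p‖ ≤ 2*ρ := by
        rw [← dist_eq_norm]; exact hdvp.le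
      nlinarith [norm_nonneg (v - p)]
    have hfinal : ∫ s in (0:ℝ)..t, ‖f s - stepf d n h p s‖^2 ≤ ε^2 := by
      have hρ2 : (2*ρ)^2 = ε^2/(4*h) := by
        rw [hρ_def]
        rw [show (2*(ε/(4*sh)))^2 = ε^2/(4*sh^2) by field_simp; ring]
        rw [hsh2]
      have h1 : 2*h*‖v - p‖^2 ≤ 2*h*(ε^2/(4*h)) := by
        apply mul_le_mul_of_nonneg_left _ (by positivity)
        rw [← hρ2]; exact hvp2
      have h2 : 2*h*(ε^2/(4*h)) = ε^2/2 := by field_simp; ring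
      have h3 : 2*h^2*C^2 ≤ ε^2/2 := by
        have h4 : (2*(C*h))^2 ≤ ε^2 := pow_le_pow_left₀ (by positivity) hCh 2
        nlinarith [h4]
      calc ∫ s in (0:ℝ)..t, ‖f s - stepf d n h p s‖^2
          ≤ 2*h^2*C^2 + 2*h*‖v - p‖^2 := htotal
        _ ≤ ε^2/2 + ε^2/2 := by rw [← h2] at *; linarith
        _ = ε^2 := by ring
    rw [L2dist]
    calc Real.sqrt (∫ s in (0:ℝ)..t, ‖f s - stepf d n h p s‖^2)
        ≤ Real.sqrt (ε^2) := Real.sqrt_le_sqrt hfinal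
      _ = ε := Real.sqrt_sq hε.le


end Aux

/-- Kolmogorov–Tihomirov entropy bound: there are constants
`c₁ > 1`, `c₂ > 0` such that for all `t, C, ε > 0`, the Cameron–Martin ball
`H_t(C)` admits an `ε`-net in the L² metric of cardinality at most
`c₁ · exp(c₂ C t / ε)`. -/
theorem stmt4 (d : ℕ) (hd : 1 ≤ d) :
    ∃ c₁ c₂ : ℝ, 1 < c₁ ∧ 0 < c₂ ∧
      ∀ t C ε : ℝ, 0 < t → 0 < C → 0 < ε →
        ∃ S : Finset (ℝ → EuclideanSpace ℝ (Fin d)),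
          (S.card : ℝ) ≤ c₁ * Real.exp (c₂ * C * t / ε) ∧
          ∀ f ∈ CMBall d t C, ∃ k ∈ S, L2dist d t f k ≤ ε := by
  refine ⟨(6:ℝ)^d, 4*d, ?_, ?_, ?_⟩
  · exact one_lt_pow₀ (by norm_num) (by omega)
  · have h1 : (1:ℝ) ≤ d := by exact_mod_cast hd
    linarith
  · intro t C ε ht hC hε
    obtain ⟨S, hS1, hS2⟩ := key d hd t C ε ht hC hε
    refine ⟨S, ?_, hS2⟩
    calc (S.card : ℝ) ≤ (6:ℝ)^d * Real.exp (4*d*(C*t/ε)) := hS1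
      _ = (6:ℝ)^d * Real.exp (4*(d:ℝ)*C*t/ε) := by
          congr 1
          ring_nf
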